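/- If c·h_parity is entropic for a constant c > 0, where h_parity is the parity entropy function on three variables (value 1 on singletons, 2 on larger nonempty sets), then c = log₂ M for some positive integer M. Consequently, the set Γ₃* of entropic functions on three variables is not convex. -/
import Mathlib


/-- Shannon entropy (base 2) of the pushforward of `p` along `f`. -/
noncomputable def mEntropy {Ω α : Type*} [Fintype Ω] [DecidableEq α]
    (p : Ω → ℝ) (f : Ω → α) : ℝ :=
  ∑ a ∈ Finset.univ.image f,
    Real.negMulLog (∑ ω ∈ Finset.univ.filter (fun ω => f ω = a), p ω) / Real.log 2

/-- The entropy function of joint random variables `X` under the distribution `p`. -/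
noncomputable def entFn {V Ω D : Type*} [Fintype V] [DecidableEq V] [Fintype Ω]
    [DecidableEq D] (p : Ω → ℝ) (X : V → Ω → D) (S : Finset V) : ℝ :=
  mEntropy p (fun ω => fun v : {v // v ∈ S} => X v.1 ω)

/-- `g` is entropic if it is the entropy function of a joint distribution of
finitely-valued random variables indexed by `V`. -/
def IsEntropic {V : Type*} [Fintype V] [DecidableEq V] (g : Finset V → ℝ) : Prop :=
  ∃ (m : ℕ) (p : Fin m → ℝ) (X : V → Fin m → ℕ),
    (∀ i, 0 ≤ p i) ∧ (∑ i, p i = 1) ∧ ∀ S, g S = entFn p X S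

/-- The parity entropy function on three variables. -/
def hparity : Finset (Fin 3) → ℝ := fun S => if S = ∅ then 0 else if S.card = 1 then 1 else 2

open Finset Real

section Aux
variable {Ω : Type*} [Fintype Ω] {α β : Type*} [DecidableEq α] [DecidableEq β]

noncomputable def qm (p : Ω → ℝ) (f : Ω → α) (a : α) : ℝ :=
  ∑ ω ∈ Finset.univ.filter (fun ω => f ω = a), p ω

lemma mEntropy_eq (p : Ω → ℝ) (f : Ω → α) :
    mEntropy p f = (∑ a ∈ Finset.univ.image f, Real.negMulLog (qm p f a)) / Real.log 2 := by
  simp [mEntropy, qm, Finset.sum_div]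

variable {p : Ω → ℝ}

lemma qm_nonneg (hp0 : ∀ ω, 0 ≤ p ω) (f : Ω → α) (a : α) : 0 ≤ qm p f a :=
  Finset.sum_nonneg fun ω _ => hp0 ω

lemma qm_eq_zero (f : Ω → α) {a : α} (ha : a ∉ Finset.univ.image f) : qm p f a = 0 := by
  rw [qm]
  apply Finset.sum_eq_zero
  intro ω hω
  simp only [Finset.mem_filter, Finset.mem_univ, true_and] at hω
  exact (ha (Finset.mem_image.mpr ⟨ω, Finset.mem_univ ω, hω⟩)).elim

lemma single_le_qm (hp0 : ∀ ω, 0 ≤ p ω) (f : Ω → α) (ω : Ω) : p ω ≤ qm p f (f ω) :=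
  Finset.single_le_sum (f := p) (fun i _ => hp0 i) (by simp)

lemma qm_pos (hp0 : ∀ ω, 0 ≤ p ω) (f : Ω → α) {ω : Ω} (h : 0 < p ω) : 0 < qm p f (f ω) :=
  lt_of_lt_of_le h (single_le_qm hp0 f ω)

lemma exists_pos_of_qm_pos (hp0 : ∀ ω, 0 ≤ p ω) {f : Ω → α} {a : α} (h : 0 < qm p f a) :
    ∃ ω, 0 < p ω ∧ f ω = a := by
  by_contra hc
  push_neg at hc
  have : qm p f a = 0 := by
    apply Finset.sum_eq_zero
    intro ω hω
    simp only [Finset.mem_filter, Finset.mem_univ, true_and] at hω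
    rcases lt_or_eq_of_le (hp0 ω) with h' | h'
    · exact absurd hω (hc ω h')
    · exact h'.symm
  linarith

lemma sum_qm (f : Ω → α) : ∑ a ∈ Finset.univ.image f, qm p f a = ∑ ω, p ω :=
  Finset.sum_fiberwise_of_maps_to (fun ω _ => Finset.mem_image_of_mem f (Finset.mem_univ ω)) p

lemma qm_comp (φ : α → β) (f : Ω → α) (b : β) :
    qm p (fun ω => φ (f ω)) b = ∑ a ∈ (Finset.univ.image f).filter (fun a => φ a = b), qm p f a := by
  rw [qm, ← Finset.sum_fiberwise_of_maps_to
    (g := f) (t := (Finset.univ.image f).filter (fun a => φ a = b))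
    (fun ω hω => by
      simp only [Finset.mem_filter, Finset.mem_univ, true_and] at hω ⊢
      exact ⟨Finset.mem_image_of_mem f (Finset.mem_univ ω), hω⟩) p]
  apply Finset.sum_congr rfl
  intro a ha
  simp only [Finset.mem_filter, Finset.mem_univ, true_and] at ha
  rw [qm]
  apply Finset.sum_congr _ (fun _ _ => rfl)
  ext ω
  simp only [Finset.mem_filter, Finset.mem_univ, true_and]
  constructor
  · rintro ⟨-, h2⟩; exact h2
  · intro h; exact ⟨by rw [h]; exact ha.2, h⟩


lemma mEntropy_comp_inj {φ : α → β} (hφ : Function.Injective φ) (f : Ω → α) :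
    mEntropy p (fun ω => φ (f ω)) = mEntropy p f := by
  rw [mEntropy_eq, mEntropy_eq]
  congr 1
  have himg : Finset.univ.image (fun ω => φ (f ω)) = (Finset.univ.image f).image φ := by
    rw [Finset.image_image]; rfl
  rw [himg, Finset.sum_image (fun a _ b _ h => hφ h)]
  apply Finset.sum_congr rfl
  intro a _
  congr 1
  rw [qm, qm]
  apply Finset.sum_congr _ (fun _ _ => rfl)
  ext ω
  simp [hφ.eq_iff]

/-- From equality of entropies along a coarsening, positive-probability determinism. -/
lemma det_of_mEntropy_eq (hp0 : ∀ ω, 0 ≤ p ω) {φ : α → β} {f : Ω → α}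
    (h : mEntropy p (fun ω => φ (f ω)) = mEntropy p f) :
    ∀ ω ω', 0 < p ω → 0 < p ω' → φ (f ω) = φ (f ω') → f ω = f ω' := by
  classical
  set g := fun ω => φ (f ω) with hg
  -- key identity
  have key : ∑ b ∈ Finset.univ.image g, Real.negMulLog (qm p g b)
      = ∑ a ∈ Finset.univ.image f, qm p f a * (- Real.log (qm p g (φ a))) := by
    rw [← Finset.sum_fiberwise_of_maps_to (g := φ) (t := Finset.univ.image g)
      (fun a ha => by
        obtain ⟨ω, -, rfl⟩ := Finset.mem_image.mp ha
        exact Finset.mem_image_of_mem g (Finset.mem_univ ω))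
      (fun a => qm p f a * (- Real.log (qm p g (φ a))))]
    apply Finset.sum_congr rfl
    intro b hb
    have : ∀ a ∈ (Finset.univ.image f).filter (fun a => φ a = b),
        qm p f a * (- Real.log (qm p g (φ a))) = qm p f a * (- Real.log (qm p g b)) := by
      intro a ha
      rw [(Finset.mem_filter.mp ha).2]
    rw [Finset.sum_congr rfl this, ← Finset.sum_mul, ← qm_comp φ f b]
    simp only [Real.negMulLog]
    ring
  have hT : ∀ a ∈ Finset.univ.image f,
      0 ≤ qm p f a * (Real.log (qm p g (φ a)) - Real.log (qm p f a)) := by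
    intro a ha
    rcases eq_or_lt_of_le (qm_nonneg hp0 f a) with h0 | h0
    · rw [← h0]; simp
    · apply mul_nonneg h0.le
      have hle : qm p f a ≤ qm p g (φ a) := by
        rw [qm_comp φ f (φ a)]
        apply Finset.single_le_sum (f := fun a => qm p f a)
          (fun a _ => qm_nonneg hp0 f a)
        simp [ha]
      have := Real.log_le_log h0 hle
      linarith
  have hsum0 : ∑ a ∈ Finset.univ.image f,
      qm p f a * (Real.log (qm p g (φ a)) - Real.log (qm p f a)) = 0 := by
    have hlog : Real.log 2 ≠ 0 := by
      have := Real.log_pos (by norm_num : (1:ℝ) < 2)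
      linarith
    have h2 : (∑ b ∈ Finset.univ.image g, Real.negMulLog (qm p g b))
        = ∑ a ∈ Finset.univ.image f, Real.negMulLog (qm p f a) := by
      have := h
      rw [mEntropy_eq, mEntropy_eq, div_eq_div_iff hlog hlog] at this
      exact mul_right_cancel₀ hlog (by linarith [this])
    rw [key] at h2
    have : ∑ a ∈ Finset.univ.image f,
        (qm p f a * (Real.log (qm p g (φ a)) - Real.log (qm p f a))) =
        ∑ a ∈ Finset.univ.image f, (qm p f a * (- Real.log (qm p g (φ a)))
          - Real.negMulLog (qm p f a)) * (-1) := by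
      apply Finset.sum_congr rfl
      intro a _
      simp [Real.negMulLog]
      ring
    rw [this, ← Finset.sum_mul, Finset.sum_sub_distrib, h2]
    ring
  have hTz := (Finset.sum_eq_zero_iff_of_nonneg hT).mp hsum0
  -- now the conclusion
  intro ω ω' hω hω' hφeq
  by_contra hne
  have haω : f ω ∈ Finset.univ.image f := Finset.mem_image_of_mem f (Finset.mem_univ ω)
  have hq : 0 < qm p f (f ω) := qm_pos hp0 f hω
  have hTa := hTz (f ω) haω
  have hlogeq : Real.log (qm p g (φ (f ω))) = Real.log (qm p f (f ω)) := by
    rcases mul_eq_zero.mp hTa with h' | h'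
    · exact absurd h' (ne_of_gt hq)
    · linarith
  have hQle : qm p f (f ω) + qm p f (f ω') ≤ qm p g (φ (f ω)) := by
    rw [qm_comp φ f (φ (f ω))]
    have hsub : ({f ω, f ω'} : Finset α) ⊆
        (Finset.univ.image f).filter (fun a => φ a = φ (f ω)) := by
      intro a ha
      simp only [Finset.mem_insert, Finset.mem_singleton] at ha
      rcases ha with rfl | rfl
      · simp [haω]
      · simp [Finset.mem_image_of_mem f (Finset.mem_univ ω'), hφeq.symm]
    calc qm p f (f ω) + qm p f (f ω') = ∑ a ∈ ({f ω, f ω'} : Finset α), qm p f a := by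
          rw [Finset.sum_pair hne]
      _ ≤ _ := Finset.sum_le_sum_of_subset_of_nonneg hsub
          (fun a _ _ => qm_nonneg hp0 f a)
  have hq' : 0 < qm p f (f ω') := qm_pos hp0 f hω'
  have hQpos : 0 < qm p g (φ (f ω)) := lt_of_lt_of_le hq (by linarith)
  have : qm p g (φ (f ω)) = qm p f (f ω) := Real.log_injOn_pos
    (Set.mem_Ioi.mpr hQpos) (Set.mem_Ioi.mpr hq) hlogeq
  linarith


lemma gibbs_term_le {u v : ℝ} (hu : 0 ≤ u) (hv : 0 ≤ v) (huv : u ≠ 0 → v ≠ 0) :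
    u - v ≤ u * Real.log u - u * Real.log v := by
  rcases eq_or_lt_of_le hu with h0 | h0
  · rw [← h0]; simpa using hv
  · have hv0 : 0 < v := lt_of_le_of_ne hv (Ne.symm (huv (ne_of_gt h0)))
    have hlog := Real.log_le_sub_one_of_pos (div_pos hv0 h0)
    rw [Real.log_div (ne_of_gt hv0) (ne_of_gt h0)] at hlog
    have h2 := mul_le_mul_of_nonneg_left hlog h0.le
    have hdiv : u * (v / u - 1) = v - u := by field_simp
    nlinarith

lemma gibbs_term_eq {u v : ℝ} (hu : 0 ≤ u) (hv : 0 ≤ v) (huv : u ≠ 0 → v ≠ 0)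
    (h : u * Real.log u - u * Real.log v = u - v) : u = v := by
  rcases eq_or_lt_of_le hu with h0 | h0
  · rw [← h0] at h ⊢
    simp only [zero_mul, sub_zero, zero_sub] at h
    linarith
  · have hv0 : 0 < v := lt_of_le_of_ne hv (Ne.symm (huv (ne_of_gt h0)))
    by_contra hne
    have hne' : v / u ≠ 1 := by
      intro hh
      rw [div_eq_one_iff_eq (ne_of_gt h0)] at hh
      exact hne hh.symm
    have hlog := Real.log_lt_sub_one_of_pos (div_pos hv0 h0) hne'
    rw [Real.log_div (ne_of_gt hv0) (ne_of_gt h0)] at hlog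
    have h2 := mul_lt_mul_of_pos_left hlog h0
    have hdiv : u * (v / u - 1) = v - u := by field_simp
    nlinarith

lemma qm_marg_fst (f : Ω → α) (g : Ω → β) (a : α) :
    qm p f a = ∑ b ∈ Finset.univ.image g, qm p (fun ω => (f ω, g ω)) (a, b) := by
  rw [qm, ← Finset.sum_fiberwise_of_maps_to (g := g) (t := Finset.univ.image g)
    (fun ω _ => Finset.mem_image_of_mem g (Finset.mem_univ ω)) p]
  apply Finset.sum_congr rfl
  intro b _
  rw [qm]
  apply Finset.sum_congr _ (fun _ _ => rfl)
  ext ω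
  simp only [Finset.mem_filter, Finset.mem_univ, true_and, Prod.mk.injEq]
  try tauto

lemma qm_marg_snd (f : Ω → α) (g : Ω → β) (b : β) :
    qm p g b = ∑ a ∈ Finset.univ.image f, qm p (fun ω => (f ω, g ω)) (a, b) := by
  rw [qm, ← Finset.sum_fiberwise_of_maps_to (g := f) (t := Finset.univ.image f)
    (fun ω _ => Finset.mem_image_of_mem f (Finset.mem_univ ω)) p]
  apply Finset.sum_congr rfl
  intro a _
  rw [qm]
  apply Finset.sum_congr _ (fun _ _ => rfl)
  ext ω
  simp only [Finset.mem_filter, Finset.mem_univ, true_and, Prod.mk.injEq]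
  try tauto

lemma qm_pair_le_fst (hp0 : ∀ ω, 0 ≤ p ω) (f : Ω → α) (g : Ω → β) (a : α) (b : β) :
    qm p (fun ω => (f ω, g ω)) (a, b) ≤ qm p f a := by
  apply Finset.sum_le_sum_of_subset_of_nonneg
  · intro ω hω
    simp only [Finset.mem_filter, Finset.mem_univ, true_and, Prod.mk.injEq] at hω ⊢
    exact hω.1
  · exact fun ω _ _ => hp0 ω

lemma qm_pair_le_snd (hp0 : ∀ ω, 0 ≤ p ω) (f : Ω → α) (g : Ω → β) (a : α) (b : β) :
    qm p (fun ω => (f ω, g ω)) (a, b) ≤ qm p g b := by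
  apply Finset.sum_le_sum_of_subset_of_nonneg
  · intro ω hω
    simp only [Finset.mem_filter, Finset.mem_univ, true_and, Prod.mk.injEq] at hω ⊢
    exact hω.2
  · exact fun ω _ _ => hp0 ω

/-- Equality in subadditivity implies independence. -/
lemma indep_of_mEntropy_add (hp0 : ∀ ω, 0 ≤ p ω) (hp1 : ∑ ω, p ω = 1)
    {f : Ω → α} {g : Ω → β}
    (h : mEntropy p (fun ω => (f ω, g ω)) = mEntropy p f + mEntropy p g) :
    ∀ a b, qm p (fun ω => (f ω, g ω)) (a, b) = qm p f a * qm p g b := by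
  classical
  have hlog : Real.log 2 ≠ 0 := by
    have := Real.log_pos (by norm_num : (1:ℝ) < 2)
    linarith
  have hsub : Finset.univ.image (fun ω => (f ω, g ω)) ⊆
      (Finset.univ.image f) ×ˢ (Finset.univ.image g) := by
    intro c hc
    obtain ⟨ω, -, rfl⟩ := Finset.mem_image.mp hc
    simp only [Finset.mem_product]
    exact ⟨Finset.mem_image_of_mem f (Finset.mem_univ ω),
      Finset.mem_image_of_mem g (Finset.mem_univ ω)⟩
  have hzero : ∀ c ∈ (Finset.univ.image f) ×ˢ (Finset.univ.image g),
      c ∉ Finset.univ.image (fun ω => (f ω, g ω)) →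
      qm p (fun ω => (f ω, g ω)) c = 0 := fun c _ hc => qm_eq_zero _ hc
  have hSu : ∑ c ∈ (Finset.univ.image f) ×ˢ (Finset.univ.image g),
      qm p (fun ω => (f ω, g ω)) c = 1 := by
    rw [← Finset.sum_subset hsub (fun c hc h2 => hzero c hc h2)]
    rw [sum_qm (fun ω => (f ω, g ω)), hp1]
  have hSv : ∑ c ∈ (Finset.univ.image f) ×ˢ (Finset.univ.image g),
      qm p f c.1 * qm p g c.2 = 1 := by
    rw [Finset.sum_product, ← Finset.sum_mul_sum, sum_qm f, sum_qm g, hp1, one_mul]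
  -- entropy sums written over the product set
  have hEk : (mEntropy p (fun ω => (f ω, g ω))) * Real.log 2 =
      ∑ c ∈ (Finset.univ.image f) ×ˢ (Finset.univ.image g),
        Real.negMulLog (qm p (fun ω => (f ω, g ω)) c) := by
    rw [mEntropy_eq, div_mul_cancel₀ _ hlog]
    exact Finset.sum_subset hsub (fun c hc h2 => by rw [hzero c hc h2]; simp)
  have hEf : (mEntropy p f) * Real.log 2 =
      ∑ c ∈ (Finset.univ.image f) ×ˢ (Finset.univ.image g),
        qm p (fun ω => (f ω, g ω)) c * (- Real.log (qm p f c.1)) := by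
    rw [mEntropy_eq, div_mul_cancel₀ _ hlog, Finset.sum_product]
    apply Finset.sum_congr rfl
    intro a _
    have hm := qm_marg_fst (p := p) f g a
    calc Real.negMulLog (qm p f a) = (qm p f a) * (- Real.log (qm p f a)) := by
          rw [Real.negMulLog]; ring
      _ = (∑ b ∈ Finset.univ.image g, qm p (fun ω => (f ω, g ω)) (a, b)) *
            (- Real.log (qm p f a)) := by rw [← hm]
      _ = _ := Finset.sum_mul _ _ _
  have hEg : (mEntropy p g) * Real.log 2 =
      ∑ c ∈ (Finset.univ.image f) ×ˢ (Finset.univ.image g),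
        qm p (fun ω => (f ω, g ω)) c * (- Real.log (qm p g c.2)) := by
    rw [mEntropy_eq, div_mul_cancel₀ _ hlog, Finset.sum_product, Finset.sum_comm]
    apply Finset.sum_congr rfl
    intro b _
    have hm := qm_marg_snd (p := p) f g b
    calc Real.negMulLog (qm p g b) = (qm p g b) * (- Real.log (qm p g b)) := by
          rw [Real.negMulLog]; ring
      _ = (∑ a ∈ Finset.univ.image f, qm p (fun ω => (f ω, g ω)) (a, b)) *
            (- Real.log (qm p g b)) := by rw [← hm]
      _ = _ := Finset.sum_mul _ _ _
  -- the divergence is zero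
  have hD : ∑ c ∈ (Finset.univ.image f) ×ˢ (Finset.univ.image g),
      (qm p (fun ω => (f ω, g ω)) c * Real.log (qm p (fun ω => (f ω, g ω)) c)
        - qm p (fun ω => (f ω, g ω)) c * Real.log (qm p f c.1 * qm p g c.2)) = 0 := by
    have hterm : ∀ c ∈ (Finset.univ.image f) ×ˢ (Finset.univ.image g),
        (qm p (fun ω => (f ω, g ω)) c * Real.log (qm p (fun ω => (f ω, g ω)) c)
          - qm p (fun ω => (f ω, g ω)) c * Real.log (qm p f c.1 * qm p g c.2)) =
        (- Real.negMulLog (qm p (fun ω => (f ω, g ω)) c))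
          - (qm p (fun ω => (f ω, g ω)) c * Real.log (qm p f c.1)
            + qm p (fun ω => (f ω, g ω)) c * Real.log (qm p g c.2)) := by
      intro c _
      rcases eq_or_lt_of_le (qm_nonneg hp0 (fun ω => (f ω, g ω)) c) with h0 | h0
      · rw [← h0]; simp
      · have hf0 : qm p f c.1 ≠ 0 := by
          have := qm_pair_le_fst hp0 f g c.1 c.2
          intro hh; rw [hh] at this; simp at this; linarith
        have hg0 : qm p g c.2 ≠ 0 := by
          have := qm_pair_le_snd hp0 f g c.1 c.2
          intro hh; rw [hh] at this; simp at this; linarith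
        rw [Real.log_mul hf0 hg0, Real.negMulLog]
        ring
    rw [Finset.sum_congr rfl hterm, Finset.sum_sub_distrib, Finset.sum_add_distrib,
      Finset.sum_neg_distrib]
    have e1 : ∑ c ∈ (Finset.univ.image f) ×ˢ (Finset.univ.image g),
        qm p (fun ω => (f ω, g ω)) c * Real.log (qm p f c.1)
        = - (mEntropy p f * Real.log 2) := by
      rw [hEf, ← Finset.sum_neg_distrib]
      apply Finset.sum_congr rfl; intro c _; ring
    have e2 : ∑ c ∈ (Finset.univ.image f) ×ˢ (Finset.univ.image g),
        qm p (fun ω => (f ω, g ω)) c * Real.log (qm p g c.2)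
        = - (mEntropy p g * Real.log 2) := by
      rw [hEg, ← Finset.sum_neg_distrib]
      apply Finset.sum_congr rfl; intro c _; ring
    rw [e1, e2, ← hEk, h]
    ring
  -- termwise equality
  have hall : ∀ c ∈ (Finset.univ.image f) ×ˢ (Finset.univ.image g),
      qm p (fun ω => (f ω, g ω)) c = qm p f c.1 * qm p g c.2 := by
    have hnn : ∀ c ∈ (Finset.univ.image f) ×ˢ (Finset.univ.image g),
        0 ≤ (qm p (fun ω => (f ω, g ω)) c * Real.log (qm p (fun ω => (f ω, g ω)) c)
          - qm p (fun ω => (f ω, g ω)) c * Real.log (qm p f c.1 * qm p g c.2))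
          - (qm p (fun ω => (f ω, g ω)) c - qm p f c.1 * qm p g c.2) := by
      intro c _
      have := gibbs_term_le (qm_nonneg hp0 (fun ω => (f ω, g ω)) c)
        (mul_nonneg (qm_nonneg hp0 f c.1) (qm_nonneg hp0 g c.2))
        (fun hne => by
          have h1 := qm_pair_le_fst hp0 f g c.1 c.2
          have h2 := qm_pair_le_snd hp0 f g c.1 c.2
          have h0 := lt_of_le_of_ne (qm_nonneg hp0 (fun ω => (f ω, g ω)) c) (Ne.symm hne)
          exact ne_of_gt (mul_pos (lt_of_lt_of_le h0 h1) (lt_of_lt_of_le h0 h2)))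
      linarith
    have hzsum : ∑ c ∈ (Finset.univ.image f) ×ˢ (Finset.univ.image g),
        ((qm p (fun ω => (f ω, g ω)) c * Real.log (qm p (fun ω => (f ω, g ω)) c)
          - qm p (fun ω => (f ω, g ω)) c * Real.log (qm p f c.1 * qm p g c.2))
          - (qm p (fun ω => (f ω, g ω)) c - qm p f c.1 * qm p g c.2)) = 0 := by
      rw [Finset.sum_sub_distrib, hD, Finset.sum_sub_distrib, hSu, hSv]
      ring
    have hz := (Finset.sum_eq_zero_iff_of_nonneg hnn).mp hzsum
    intro c hc
    have := hz c hc
    apply gibbs_term_eq (qm_nonneg hp0 (fun ω => (f ω, g ω)) c)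
      (mul_nonneg (qm_nonneg hp0 f c.1) (qm_nonneg hp0 g c.2))
      (fun hne => by
        have h1 := qm_pair_le_fst hp0 f g c.1 c.2
        have h2 := qm_pair_le_snd hp0 f g c.1 c.2
        have h0 := lt_of_le_of_ne (qm_nonneg hp0 (fun ω => (f ω, g ω)) c) (Ne.symm hne)
        exact ne_of_gt (mul_pos (lt_of_lt_of_le h0 h1) (lt_of_lt_of_le h0 h2)))
    linarith
  -- conclude for all a b
  intro a b
  by_cases hmem : (a, b) ∈ (Finset.univ.image f) ×ˢ (Finset.univ.image g)
  · exact hall (a, b) hmem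
  · simp only [Finset.mem_product, not_and_or] at hmem
    rcases hmem with hm | hm
    · have h1 : qm p f a = 0 := qm_eq_zero f hm
      have h2 : qm p (fun ω => (f ω, g ω)) (a, b) = 0 :=
        le_antisymm (by rw [← h1]; exact qm_pair_le_fst hp0 f g a b)
          (qm_nonneg hp0 _ _)
      rw [h1, h2]; ring
    · have h1 : qm p g b = 0 := qm_eq_zero g hm
      have h2 : qm p (fun ω => (f ω, g ω)) (a, b) = 0 :=
        le_antisymm (by rw [← h1]; exact qm_pair_le_snd hp0 f g a b)
          (qm_nonneg hp0 _ _)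
      rw [h1, h2]; ring


lemma mEntropy_uniform (hp1 : ∑ ω, p ω = 1) {f : Ω → α} {r : ℝ}
    (hrpos : 0 < r) (hr : ∀ a ∈ Finset.univ.image f, qm p f a = r) :
    mEntropy p f = Real.logb 2 ((Finset.univ.image f).card) := by
  have hcr : ((Finset.univ.image f).card : ℝ) * r = 1 := by
    rw [← hp1, ← sum_qm f, Finset.sum_congr rfl hr, Finset.sum_const, nsmul_eq_mul]
  have hM0 : ((Finset.univ.image f).card : ℝ) ≠ 0 := by
    intro hh; rw [hh] at hcr; simp at hcr
  have hrval : r = ((Finset.univ.image f).card : ℝ)⁻¹ := by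
    field_simp at hcr ⊢
    linarith
  rw [mEntropy_eq, Finset.sum_congr rfl (fun a ha => by rw [hr a ha]),
    Finset.sum_const, nsmul_eq_mul, hrval, Real.negMulLog, Real.log_inv, Real.logb]
  field_simp

lemma exists_logb (hp0 : ∀ ω, 0 ≤ p ω) (hp1 : ∑ ω, p ω = 1) {f : Ω → α}
    (h : ∀ ω ω', 0 < p ω → 0 < p ω' → qm p f (f ω) = qm p f (f ω')) :
    ∃ M : ℕ, 0 < M ∧ mEntropy p f = Real.logb 2 M := by
  classical
  have hex : ∃ ω₀, 0 < p ω₀ := by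
    by_contra hc
    push_neg at hc
    have : ∑ ω, p ω = 0 := Finset.sum_eq_zero fun ω _ => le_antisymm (hc ω) (hp0 ω)
    rw [hp1] at this; norm_num at this
  obtain ⟨ω₀, hω₀⟩ := hex
  have hr : 0 < qm p f (f ω₀) := qm_pos hp0 f hω₀
  have hconst : ∀ a ∈ (Finset.univ.image f).filter (fun a => qm p f a ≠ 0),
      qm p f a = qm p f (f ω₀) := by
    intro a ha
    rw [Finset.mem_filter] at ha
    have hapos : 0 < qm p f a := lt_of_le_of_ne (qm_nonneg hp0 f a) (Ne.symm ha.2)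
    obtain ⟨ω, hω, rfl⟩ := exists_pos_of_qm_pos hp0 hapos
    exact h ω ω₀ hω hω₀
  have hsum1 : ∑ a ∈ (Finset.univ.image f).filter (fun a => qm p f a ≠ 0),
      qm p f a = 1 := by
    rw [Finset.sum_filter_ne_zero, sum_qm f, hp1]
  refine ⟨((Finset.univ.image f).filter (fun a => qm p f a ≠ 0)).card, ?_, ?_⟩
  · rcases Nat.eq_zero_or_pos ((Finset.univ.image f).filter (fun a => qm p f a ≠ 0)).card
      with h0 | h0
    · rw [Finset.card_eq_zero] at h0
      rw [h0] at hsum1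
      simp at hsum1
    · exact h0
  · have hcr : (((Finset.univ.image f).filter (fun a => qm p f a ≠ 0)).card : ℝ)
        * qm p f (f ω₀) = 1 := by
      rw [← hsum1, Finset.sum_congr rfl hconst, Finset.sum_const, nsmul_eq_mul]
    have hM0 : (((Finset.univ.image f).filter (fun a => qm p f a ≠ 0)).card : ℝ) ≠ 0 := by
      intro hh; rw [hh] at hcr; simp at hcr
    have hrval : qm p f (f ω₀)
        = (((Finset.univ.image f).filter (fun a => qm p f a ≠ 0)).card : ℝ)⁻¹ := by
      field_simp at hcr ⊢
      linarith
    rw [mEntropy_eq]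
    rw [← Finset.sum_filter_of_ne (s := Finset.univ.image f)
      (p := fun a => qm p f a ≠ 0)
      (fun a _ hne => by intro hq; rw [hq] at hne; simp [Real.negMulLog] at hne)]
    rw [Finset.sum_congr rfl (fun a ha => by rw [hconst a ha]),
      Finset.sum_const, nsmul_eq_mul, hrval, Real.negMulLog, Real.log_inv, Real.logb]
    field_simp

lemma mEntropy_const_zero (hp1 : ∑ ω, p ω = 1) {f : Ω → α}
    (hf : ∀ ω ω', f ω = f ω') : mEntropy p f = 0 := by
  have hne : Nonempty Ω := by
    by_contra hc
    rw [not_nonempty_iff] at hc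
    rw [Finset.univ_eq_empty, Finset.sum_empty] at hp1
    norm_num at hp1
  obtain ⟨ω₀⟩ := hne
  have himg : Finset.univ.image f = {f ω₀} := by
    ext a
    simp only [Finset.mem_image, Finset.mem_univ, true_and, Finset.mem_singleton]
    constructor
    · rintro ⟨ω, rfl⟩; exact hf ω ω₀
    · intro hh; exact ⟨ω₀, hh.symm⟩
  have hq : qm p f (f ω₀) = 1 := by
    rw [qm, ← hp1]
    apply Finset.sum_congr _ (fun _ _ => rfl)
    ext ω
    simp [hf ω ω₀]
  rw [mEntropy_eq, himg, Finset.sum_singleton, hq]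
  simp

lemma mEntropy_inj_uniform {m : ℕ} {f : Fin m → α} (hf : Function.Injective f)
    (hm : m ≠ 0) :
    mEntropy (fun _ : Fin m => (m : ℝ)⁻¹) f = Real.logb 2 m := by
  have hmR : ((m:ℝ)) ≠ 0 := Nat.cast_ne_zero.mpr hm
  have h := mEntropy_uniform (p := fun _ : Fin m => (m : ℝ)⁻¹) (f := f)
    (by simp [Finset.sum_const]; field_simp)
    (r := (m:ℝ)⁻¹) (by positivity)
    (fun a ha => by
      obtain ⟨ω, -, rfl⟩ := Finset.mem_image.mp ha
      have : Finset.univ.filter (fun ω' : Fin m => f ω' = f ω) = {ω} := by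
        ext ω'
        simp [hf.eq_iff]
      rw [qm, this, Finset.sum_singleton])
  rw [h, Finset.card_image_of_injective _ hf, Finset.card_univ, Fintype.card_fin]


lemma entFn_empty (hp1 : ∑ ω, p ω = 1) (X : Fin 3 → Ω → ℕ) :
    entFn p X ∅ = 0 :=
  mEntropy_const_zero hp1 (fun ω ω' => funext fun v => (Finset.notMem_empty v.1 v.2).elim)

lemma entFn_singleton (X : Fin 3 → Ω → ℕ) (i : Fin 3) :
    entFn p X {i} = mEntropy p (X i) := by
  have hφ : Function.Injective
      (fun F : {v // v ∈ ({i} : Finset (Fin 3))} → ℕ =>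
        F ⟨i, Finset.mem_singleton_self i⟩) := by
    intro F G h
    funext v
    obtain ⟨v, hv⟩ := v
    rw [Finset.mem_singleton] at hv
    subst hv
    exact h
  exact (mEntropy_comp_inj hφ
    (fun ω => fun v : {v // v ∈ ({i} : Finset (Fin 3))} => X v.1 ω)).symm

lemma entFn_pair (X : Fin 3 → Ω → ℕ) (i j : Fin 3) (hi : i ∈ ({i, j} : Finset (Fin 3)))
    (hj : j ∈ ({i, j} : Finset (Fin 3))) :
    entFn p X {i, j} = mEntropy p (fun ω => (X i ω, X j ω)) := by
  have hφ : Function.Injective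
      (fun F : {v // v ∈ ({i, j} : Finset (Fin 3))} → ℕ => (F ⟨i, hi⟩, F ⟨j, hj⟩)) := by
    intro F G h
    rw [Prod.ext_iff] at h
    funext v
    obtain ⟨v, hv⟩ := v
    rw [Finset.mem_insert, Finset.mem_singleton] at hv
    rcases hv with rfl | rfl
    · exact h.1
    · exact h.2
  exact (mEntropy_comp_inj hφ
    (fun ω => fun v : {v // v ∈ ({i, j} : Finset (Fin 3))} => X v.1 ω)).symm

lemma entFn_univ (X : Fin 3 → Ω → ℕ) :
    entFn p X Finset.univ = mEntropy p (fun ω => (X 0 ω, X 1 ω, X 2 ω)) := by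
  have hφ : Function.Injective
      (fun F : {v // v ∈ (Finset.univ : Finset (Fin 3))} → ℕ =>
        (F ⟨0, Finset.mem_univ 0⟩, F ⟨1, Finset.mem_univ 1⟩, F ⟨2, Finset.mem_univ 2⟩)) := by
    intro F G h
    rw [Prod.ext_iff] at h
    obtain ⟨h1, h23⟩ := h
    rw [Prod.ext_iff] at h23
    funext v
    obtain ⟨v, hv⟩ := v
    fin_cases v
    · exact h1
    · exact h23.1
    · exact h23.2
  exact (mEntropy_comp_inj hφ
    (fun ω => fun v : {v // v ∈ (Finset.univ : Finset (Fin 3))} => X v.1 ω)).symm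

lemma logb_two_four : Real.logb 2 (4 : ℝ) = 2 := by
  rw [show (4:ℝ) = 2 ^ (2:ℕ) by norm_num, Real.logb_pow,
    Real.logb_self_eq_one (by norm_num)]
  norm_num

lemma logb_two_sixteen : Real.logb 2 (16 : ℝ) = 4 := by
  rw [show (16:ℝ) = 2 ^ (4:ℕ) by norm_num, Real.logb_pow,
    Real.logb_self_eq_one (by norm_num)]
  norm_num

lemma logb_two_two : Real.logb 2 (2 : ℝ) = 1 :=
  Real.logb_self_eq_one (by norm_num)

end Aux

section Main

lemma hparity_two {S : Finset (Fin 3)} (h1 : S ≠ ∅) (h2 : S.card ≠ 1) : hparity S = 2 := by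
  simp [hparity, h1, h2]

lemma hparity_one {S : Finset (Fin 3)} (h1 : S ≠ ∅) (h2 : S.card = 1) : hparity S = 1 := by
  simp [hparity, h1, h2]

lemma aux_part1 : ∀ c : ℝ, 0 < c → IsEntropic (fun S => c * hparity S) →
    ∃ M : ℕ, 0 < M ∧ c = Real.logb 2 M := by
  rintro c hc ⟨m, p, X, hp0, hp1, hS⟩
  -- evaluate the entropy function at the various sets
  have e0 : c = mEntropy p (X 0) := by
    have h : c * hparity {0} = entFn p X {0} := hS {0}
    rw [entFn_singleton, hparity_one (by decide) (by decide), mul_one] at h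
    exact h
  have e1 : c = mEntropy p (X 1) := by
    have h : c * hparity {1} = entFn p X {1} := hS {1}
    rw [entFn_singleton, hparity_one (by decide) (by decide), mul_one] at h
    exact h
  have e2 : c = mEntropy p (X 2) := by
    have h : c * hparity {2} = entFn p X {2} := hS {2}
    rw [entFn_singleton, hparity_one (by decide) (by decide), mul_one] at h
    exact h
  have e01 : c * 2 = mEntropy p (fun ω => (X 0 ω, X 1 ω)) := by
    have h : c * hparity {0, 1} = entFn p X {0, 1} := hS {0, 1}
    rw [entFn_pair X 0 1 (by decide) (by decide),
      hparity_two (by decide) (by decide)] at h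
    exact h
  have e02 : c * 2 = mEntropy p (fun ω => (X 0 ω, X 2 ω)) := by
    have h : c * hparity {0, 2} = entFn p X {0, 2} := hS {0, 2}
    rw [entFn_pair X 0 2 (by decide) (by decide),
      hparity_two (by decide) (by decide)] at h
    exact h
  have e12 : c * 2 = mEntropy p (fun ω => (X 1 ω, X 2 ω)) := by
    have h : c * hparity {1, 2} = entFn p X {1, 2} := hS {1, 2}
    rw [entFn_pair X 1 2 (by decide) (by decide),
      hparity_two (by decide) (by decide)] at h
    exact h
  have eU : c * 2 = mEntropy p (fun ω => (X 0 ω, X 1 ω, X 2 ω)) := by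
    have h : c * hparity Finset.univ = entFn p X Finset.univ := hS Finset.univ
    rw [entFn_univ, hparity_two (by decide) (by decide)] at h
    exact h
  -- determinism
  have detC := det_of_mEntropy_eq hp0 (φ := fun t : ℕ × ℕ × ℕ => (t.1, t.2.1))
    (f := fun ω => (X 0 ω, X 1 ω, X 2 ω)) (e01.symm.trans eU)
  have detB := det_of_mEntropy_eq hp0 (φ := fun t : ℕ × ℕ × ℕ => (t.1, t.2.2))
    (f := fun ω => (X 0 ω, X 1 ω, X 2 ω)) (e02.symm.trans eU)
  have detA := det_of_mEntropy_eq hp0 (φ := fun t : ℕ × ℕ × ℕ => t.2)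
    (f := fun ω => (X 0 ω, X 1 ω, X 2 ω)) (e12.symm.trans eU)
  -- independence
  have iAB := indep_of_mEntropy_add hp0 hp1 (f := X 0) (g := X 1)
    (by rw [← e01, ← e0, ← e1]; ring)
  have iAC := indep_of_mEntropy_add hp0 hp1 (f := X 0) (g := X 2)
    (by rw [← e02, ← e0, ← e2]; ring)
  have iBC := indep_of_mEntropy_add hp0 hp1 (f := X 1) (g := X 2)
    (by rw [← e12, ← e1, ← e2]; ring)
  -- all pair measures agree with the triple one
  have hABC : ∀ ω, 0 < p ω →
      qm p (fun ω' => (X 0 ω', X 1 ω')) (X 0 ω, X 1 ω)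
      = ∑ ω' ∈ Finset.univ.filter
          (fun ω' => X 0 ω' = X 0 ω ∧ X 1 ω' = X 1 ω ∧ X 2 ω' = X 2 ω), p ω' := by
    intro ω hω
    rw [qm]
    refine (Finset.sum_subset ?_ ?_).symm
    · intro x hx
      simp only [Finset.mem_filter, Finset.mem_univ, true_and, Prod.mk.injEq] at hx ⊢
      exact ⟨hx.1, hx.2.1⟩
    · intro x hx hnx
      simp only [Finset.mem_filter, Finset.mem_univ, true_and, Prod.mk.injEq] at hx hnx
      rcases eq_or_lt_of_le (hp0 x) with h0 | h0
      · exact h0.symm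
      · exfalso
        have h3 := detC x ω h0 hω (by
          simp only [Prod.mk.injEq]
          exact ⟨hx.1, hx.2⟩)
        have hCx : X 2 x = X 2 ω := congrArg (fun t : ℕ × ℕ × ℕ => t.2.2) h3
        exact hnx ⟨hx.1, hx.2, hCx⟩
  have hBCeq : ∀ ω, 0 < p ω →
      qm p (fun ω' => (X 1 ω', X 2 ω')) (X 1 ω, X 2 ω)
      = ∑ ω' ∈ Finset.univ.filter
          (fun ω' => X 0 ω' = X 0 ω ∧ X 1 ω' = X 1 ω ∧ X 2 ω' = X 2 ω), p ω' := by
    intro ω hω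
    rw [qm]
    refine (Finset.sum_subset ?_ ?_).symm
    · intro x hx
      simp only [Finset.mem_filter, Finset.mem_univ, true_and, Prod.mk.injEq] at hx ⊢
      exact ⟨hx.2.1, hx.2.2⟩
    · intro x hx hnx
      simp only [Finset.mem_filter, Finset.mem_univ, true_and, Prod.mk.injEq] at hx hnx
      rcases eq_or_lt_of_le (hp0 x) with h0 | h0
      · exact h0.symm
      · exfalso
        have h3 := detA x ω h0 hω (by
          simp only [Prod.mk.injEq]
          exact ⟨hx.1, hx.2⟩)
        have hAx : X 0 x = X 0 ω := congrArg (fun t : ℕ × ℕ × ℕ => t.1) h3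
        exact hnx ⟨hAx, hx.1, hx.2⟩
  have hACeq : ∀ ω, 0 < p ω →
      qm p (fun ω' => (X 0 ω', X 2 ω')) (X 0 ω, X 2 ω)
      = ∑ ω' ∈ Finset.univ.filter
          (fun ω' => X 0 ω' = X 0 ω ∧ X 1 ω' = X 1 ω ∧ X 2 ω' = X 2 ω), p ω' := by
    intro ω hω
    rw [qm]
    refine (Finset.sum_subset ?_ ?_).symm
    · intro x hx
      simp only [Finset.mem_filter, Finset.mem_univ, true_and, Prod.mk.injEq] at hx ⊢
      exact ⟨hx.1, hx.2.2⟩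
    · intro x hx hnx
      simp only [Finset.mem_filter, Finset.mem_univ, true_and, Prod.mk.injEq] at hx hnx
      rcases eq_or_lt_of_le (hp0 x) with h0 | h0
      · exact h0.symm
      · exfalso
        have h3 := detB x ω h0 hω (by
          simp only [Prod.mk.injEq]
          exact ⟨hx.1, hx.2⟩)
        have hBx : X 1 x = X 1 ω := congrArg (fun t : ℕ × ℕ × ℕ => t.2.1) h3
        exact hnx ⟨hx.1, hBx, hx.2⟩
  -- the masses of the three coordinates agree on the support
  have qeq : ∀ ω, 0 < p ω → qm p (X 0) (X 0 ω) = qm p (X 1) (X 1 ω)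
      ∧ qm p (X 0) (X 0 ω) = qm p (X 2) (X 2 ω) := by
    intro ω hω
    have hqA : 0 < qm p (X 0) (X 0 ω) := qm_pos hp0 (X 0) hω
    have hqB : 0 < qm p (X 1) (X 1 ω) := qm_pos hp0 (X 1) hω
    have h1 : qm p (X 0) (X 0 ω) * qm p (X 1) (X 1 ω)
        = qm p (X 1) (X 1 ω) * qm p (X 2) (X 2 ω) := by
      rw [← iAB, ← iBC, hABC ω hω, hBCeq ω hω]
    have h2 : qm p (X 0) (X 0 ω) * qm p (X 1) (X 1 ω)
        = qm p (X 0) (X 0 ω) * qm p (X 2) (X 2 ω) := by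
      rw [← iAB, ← iAC, hABC ω hω, hACeq ω hω]
    have hBC : qm p (X 1) (X 1 ω) = qm p (X 2) (X 2 ω) :=
      mul_left_cancel₀ (ne_of_gt hqA) h2
    have hAC : qm p (X 0) (X 0 ω) = qm p (X 2) (X 2 ω) := by
      rw [mul_comm (qm p (X 1) (X 1 ω)) (qm p (X 2) (X 2 ω))] at h1
      exact mul_right_cancel₀ (ne_of_gt hqB) (by rw [h1, hBC])
    exact ⟨by rw [hAC, ← hBC], hAC⟩
  -- uniformity of the first marginal on its support
  have hkey : ∀ ω ω', 0 < p ω → 0 < p ω' →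
      qm p (X 0) (X 0 ω) = qm p (X 0) (X 0 ω') := by
    intro ω ω' hω hω'
    have hpos : 0 < qm p (fun x => (X 0 x, X 1 x)) (X 0 ω', X 1 ω) := by
      rw [iAB]
      exact mul_pos (qm_pos hp0 (X 0) hω') (qm_pos hp0 (X 1) hω)
    obtain ⟨ω'', hω'', heq⟩ := exists_pos_of_qm_pos hp0 hpos
    rw [Prod.ext_iff] at heq
    have hq1 : X 0 ω'' = X 0 ω' := heq.1
    have hq2 : X 1 ω'' = X 1 ω := heq.2
    calc qm p (X 0) (X 0 ω) = qm p (X 1) (X 1 ω) := (qeq ω hω).1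
      _ = qm p (X 1) (X 1 ω'') := by rw [hq2]
      _ = qm p (X 0) (X 0 ω'') := ((qeq ω'' hω'').1).symm
      _ = qm p (X 0) (X 0 ω') := by rw [hq1]
  obtain ⟨M, hM, hE⟩ := exists_logb hp0 hp1 hkey
  exact ⟨M, hM, by rw [e0, hE]⟩


def Xw1 : Fin 3 → Fin 4 → ℕ := fun v ω =>
  if v = 0 then ω.val / 2 else if v = 1 then ω.val % 2 else (ω.val / 2 + ω.val % 2) % 2

def Xw2 : Fin 3 → Fin 16 → ℕ := fun v ω =>
  if v = 0 then ω.val / 4 else if v = 1 then ω.val % 4 else (ω.val / 4 + ω.val % 4) % 4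

lemma w1 : IsEntropic hparity := by
  have hsum : ∑ i : Fin 4, ((4:ℕ):ℝ)⁻¹ = 1 := by
    simp [Finset.sum_const, Finset.card_univ]
  refine ⟨4, fun _ => ((4:ℕ):ℝ)⁻¹, Xw1, fun i => by positivity, hsum, ?_⟩
  intro S
  have hcases := (by decide : ∀ S : Finset (Fin 3), S = ∅ ∨ S = {0} ∨ S = {1} ∨ S = {2}
    ∨ S = {0,1} ∨ S = {0,2} ∨ S = {1,2} ∨ S = Finset.univ)
  rcases hcases S with rfl | rfl | rfl | rfl | rfl | rfl | rfl | rfl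
  · rw [entFn_empty hsum]
    simp [hparity]
  · rw [entFn_singleton, hparity_one (by decide) (by decide),
      mEntropy_uniform hsum (r := (2:ℝ)⁻¹) (by norm_num) (fun a ha => ?_),
      show Finset.univ.image (Xw1 0) = {0, 1} from by decide]
    · rw [show ({0, 1} : Finset ℕ).card = 2 from by decide]
      norm_num [logb_two_two]
    · rw [show Finset.univ.image (Xw1 0) = {0, 1} from by decide] at ha
      fin_cases ha
      · rw [qm, show Finset.univ.filter (fun ω : Fin 4 => Xw1 0 ω = 0)
            = ({0, 1} : Finset (Fin 4)) from by decide,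
          Finset.sum_pair (by decide)]
        norm_num
      · rw [qm, show Finset.univ.filter (fun ω : Fin 4 => Xw1 0 ω = 1)
            = ({2, 3} : Finset (Fin 4)) from by decide,
          Finset.sum_pair (by decide)]
        norm_num
  · rw [entFn_singleton, hparity_one (by decide) (by decide),
      mEntropy_uniform hsum (r := (2:ℝ)⁻¹) (by norm_num) (fun a ha => ?_),
      show Finset.univ.image (Xw1 1) = {0, 1} from by decide]
    · rw [show ({0, 1} : Finset ℕ).card = 2 from by decide]
      norm_num [logb_two_two]
    · rw [show Finset.univ.image (Xw1 1) = {0, 1} from by decide] at ha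
      fin_cases ha
      · rw [qm, show Finset.univ.filter (fun ω : Fin 4 => Xw1 1 ω = 0)
            = ({0, 2} : Finset (Fin 4)) from by decide,
          Finset.sum_pair (by decide)]
        norm_num
      · rw [qm, show Finset.univ.filter (fun ω : Fin 4 => Xw1 1 ω = 1)
            = ({1, 3} : Finset (Fin 4)) from by decide,
          Finset.sum_pair (by decide)]
        norm_num
  · rw [entFn_singleton, hparity_one (by decide) (by decide),
      mEntropy_uniform hsum (r := (2:ℝ)⁻¹) (by norm_num) (fun a ha => ?_),
      show Finset.univ.image (Xw1 2) = {0, 1} from by decide]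
    · rw [show ({0, 1} : Finset ℕ).card = 2 from by decide]
      norm_num [logb_two_two]
    · rw [show Finset.univ.image (Xw1 2) = {0, 1} from by decide] at ha
      fin_cases ha
      · rw [qm, show Finset.univ.filter (fun ω : Fin 4 => Xw1 2 ω = 0)
            = ({0, 3} : Finset (Fin 4)) from by decide,
          Finset.sum_pair (by decide)]
        norm_num
      · rw [qm, show Finset.univ.filter (fun ω : Fin 4 => Xw1 2 ω = 1)
            = ({1, 2} : Finset (Fin 4)) from by decide,
          Finset.sum_pair (by decide)]
        norm_num
  · rw [entFn_pair Xw1 0 1 (by decide) (by decide), hparity_two (by decide) (by decide),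
      mEntropy_inj_uniform (by decide) (by norm_num)]
    norm_num [logb_two_four]
  · rw [entFn_pair Xw1 0 2 (by decide) (by decide), hparity_two (by decide) (by decide),
      mEntropy_inj_uniform (by decide) (by norm_num)]
    norm_num [logb_two_four]
  · rw [entFn_pair Xw1 1 2 (by decide) (by decide), hparity_two (by decide) (by decide),
      mEntropy_inj_uniform (by decide) (by norm_num)]
    norm_num [logb_two_four]
  · rw [entFn_univ, hparity_two (by decide) (by decide),
      mEntropy_inj_uniform (by decide) (by norm_num)]
    norm_num [logb_two_four]


lemma w2 : IsEntropic (fun S => 2 * hparity S) := by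
  have hsum : ∑ i : Fin 16, ((16:ℕ):ℝ)⁻¹ = 1 := by
    simp [Finset.sum_const, Finset.card_univ]
  refine ⟨16, fun _ => ((16:ℕ):ℝ)⁻¹, Xw2, fun i => by positivity, hsum, ?_⟩
  intro S
  beta_reduce
  have hcases := (by decide : ∀ S : Finset (Fin 3), S = ∅ ∨ S = {0} ∨ S = {1} ∨ S = {2}
    ∨ S = {0,1} ∨ S = {0,2} ∨ S = {1,2} ∨ S = Finset.univ)
  rcases hcases S with rfl | rfl | rfl | rfl | rfl | rfl | rfl | rfl
  · rw [entFn_empty hsum]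
    simp [hparity]
  · rw [entFn_singleton, hparity_one (by decide) (by decide),
      mEntropy_uniform hsum (r := (4:ℝ)⁻¹) (by norm_num) (fun a ha => ?_),
      show Finset.univ.image (Xw2 0) = {0, 1, 2, 3} from by decide]
    · rw [show ({0, 1, 2, 3} : Finset ℕ).card = 4 from by decide]
      norm_num [logb_two_four]
    · rw [show Finset.univ.image (Xw2 0) = {0, 1, 2, 3} from by decide] at ha
      fin_cases ha
      · rw [qm, Finset.sum_const, show (Finset.univ.filter
          (fun ω : Fin 16 => Xw2 0 ω = 0)).card = 4 from by decide]
        norm_num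
      · rw [qm, Finset.sum_const, show (Finset.univ.filter
          (fun ω : Fin 16 => Xw2 0 ω = 1)).card = 4 from by decide]
        norm_num
      · rw [qm, Finset.sum_const, show (Finset.univ.filter
          (fun ω : Fin 16 => Xw2 0 ω = 2)).card = 4 from by decide]
        norm_num
      · rw [qm, Finset.sum_const, show (Finset.univ.filter
          (fun ω : Fin 16 => Xw2 0 ω = 3)).card = 4 from by decide]
        norm_num
  · rw [entFn_singleton, hparity_one (by decide) (by decide),
      mEntropy_uniform hsum (r := (4:ℝ)⁻¹) (by norm_num) (fun a ha => ?_),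
      show Finset.univ.image (Xw2 1) = {0, 1, 2, 3} from by decide]
    · rw [show ({0, 1, 2, 3} : Finset ℕ).card = 4 from by decide]
      norm_num [logb_two_four]
    · rw [show Finset.univ.image (Xw2 1) = {0, 1, 2, 3} from by decide] at ha
      fin_cases ha
      · rw [qm, Finset.sum_const, show (Finset.univ.filter
          (fun ω : Fin 16 => Xw2 1 ω = 0)).card = 4 from by decide]
        norm_num
      · rw [qm, Finset.sum_const, show (Finset.univ.filter
          (fun ω : Fin 16 => Xw2 1 ω = 1)).card = 4 from by decide]
        norm_num
      · rw [qm, Finset.sum_const, show (Finset.univ.filter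
          (fun ω : Fin 16 => Xw2 1 ω = 2)).card = 4 from by decide]
        norm_num
      · rw [qm, Finset.sum_const, show (Finset.univ.filter
          (fun ω : Fin 16 => Xw2 1 ω = 3)).card = 4 from by decide]
        norm_num
  · rw [entFn_singleton, hparity_one (by decide) (by decide),
      mEntropy_uniform hsum (r := (4:ℝ)⁻¹) (by norm_num) (fun a ha => ?_),
      show Finset.univ.image (Xw2 2) = {0, 1, 2, 3} from by decide]
    · rw [show ({0, 1, 2, 3} : Finset ℕ).card = 4 from by decide]
      norm_num [logb_two_four]
    · rw [show Finset.univ.image (Xw2 2) = {0, 1, 2, 3} from by decide] at ha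
      fin_cases ha
      · rw [qm, Finset.sum_const, show (Finset.univ.filter
          (fun ω : Fin 16 => Xw2 2 ω = 0)).card = 4 from by decide]
        norm_num
      · rw [qm, Finset.sum_const, show (Finset.univ.filter
          (fun ω : Fin 16 => Xw2 2 ω = 1)).card = 4 from by decide]
        norm_num
      · rw [qm, Finset.sum_const, show (Finset.univ.filter
          (fun ω : Fin 16 => Xw2 2 ω = 2)).card = 4 from by decide]
        norm_num
      · rw [qm, Finset.sum_const, show (Finset.univ.filter
          (fun ω : Fin 16 => Xw2 2 ω = 3)).card = 4 from by decide]
        norm_num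
  · rw [entFn_pair Xw2 0 1 (by decide) (by decide), hparity_two (by decide) (by decide),
      mEntropy_inj_uniform (by decide) (by norm_num)]
    norm_num [logb_two_sixteen]
  · rw [entFn_pair Xw2 0 2 (by decide) (by decide), hparity_two (by decide) (by decide),
      mEntropy_inj_uniform (by decide) (by norm_num)]
    norm_num [logb_two_sixteen]
  · rw [entFn_pair Xw2 1 2 (by decide) (by decide), hparity_two (by decide) (by decide),
      mEntropy_inj_uniform (by decide) (by norm_num)]
    norm_num [logb_two_sixteen]
  · rw [entFn_univ, hparity_two (by decide) (by decide),
      mEntropy_inj_uniform (by decide) (by norm_num)]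
    norm_num [logb_two_sixteen]


/-- If `c · h_parity` is entropic then `c = log₂ M` for a positive integer `M`;
consequently `Γ₃*` is not convex. -/
theorem scaled_parity_entropic_iff_log :
    (∀ c : ℝ, 0 < c → IsEntropic (fun S => c * hparity S) →
      ∃ M : ℕ, 0 < M ∧ c = Real.logb 2 M) ∧
    ¬ Convex ℝ {g : Finset (Fin 3) → ℝ | IsEntropic g} := by

  refine ⟨aux_part1, ?_⟩
  intro hconv
  have hmem1 : hparity ∈ {g : Finset (Fin 3) → ℝ | IsEntropic g} := w1
  have hmem2 : (fun S => 2 * hparity S) ∈ {g : Finset (Fin 3) → ℝ | IsEntropic g} := w2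
  have hcomb := hconv hmem1 hmem2 (show (0:ℝ) ≤ 1/2 by norm_num)
    (show (0:ℝ) ≤ 1/2 by norm_num) (by norm_num)
  have heq : (1/2 : ℝ) • hparity + (1/2 : ℝ) • (fun S => 2 * hparity S)
      = fun S => (3/2 : ℝ) * hparity S := by
    funext S
    simp [Pi.add_apply, Pi.smul_apply, smul_eq_mul]
    ring
  rw [heq] at hcomb
  obtain ⟨M, hM, hlog⟩ := aux_part1 (3/2) (by norm_num) hcomb
  have hM1 : (1:ℝ) ≤ (M:ℝ) := by exact_mod_cast hM
  have hl2 : Real.log 2 ≠ 0 := ne_of_gt (Real.log_pos (by norm_num))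
  have hlogM : Real.log M = 3/2 * Real.log 2 := by
    rw [Real.logb] at hlog
    field_simp at hlog
    linarith
  have hlogs : Real.log ((M:ℝ)^2) = Real.log 8 := by
    rw [Real.log_pow, hlogM, show (8:ℝ) = 2^(3:ℕ) by norm_num, Real.log_pow]
    push_cast
    ring
  have hM2 : (M:ℝ)^2 = 8 :=
    Real.log_injOn_pos (Set.mem_Ioi.mpr (by positivity))
      (Set.mem_Ioi.mpr (by norm_num)) hlogs
  have hn : M^2 = 8 := by exact_mod_cast hM2
  rcases le_or_gt M 2 with h | h
  · nlinarith
  · nlinarith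

end Main
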